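/- Let l, w be positive integers with at least one of l, w odd. Then the reliability polynomials of the two kinds of hammock networks of dimensions (l,w) coincide: h^{(1)}_{l,w}(p) = h^{(2)}_{l,w}(p) for all p. -/

import Mathlib

open scoped Classical

/-- Parity predicate: kind 1 = even points (x+y even), kind 2 = odd points. -/
def HammockPar (i : ℕ) (p : ℤ × ℤ) : Prop :=
  if i = 1 then Even (p.1 + p.2) else Odd (p.1 + p.2)

/-- The set 𝒱_{l,w} of lattice points of the rectangle [0,l] × [0,w]. -/
def HammockVAll (l w : ℕ) : Set (ℤ × ℤ) :=
  {p | 0 ≤ p.1 ∧ p.1 ≤ (l : ℤ) ∧ 0 ≤ p.2 ∧ p.2 ≤ (w : ℤ)}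

/-- The vertex set V^{(i)}_{l,w} of the hammock network of kind `i`. -/
def HammockV (i l w : ℕ) : Set (ℤ × ℤ) :=
  {p | p ∈ HammockVAll l w ∧ HammockPar i p}

/-- The set 𝓔_{l,w} of all diagonal unit edges inside the rectangle. -/
def HammockEAll (l w : ℕ) : Set (Sym2 (ℤ × ℤ)) :=
  {e | ∃ a b : ℤ × ℤ, e = s(a, b) ∧ a ∈ HammockVAll l w ∧ b ∈ HammockVAll l w ∧
      |a.1 - b.1| = 1 ∧ |a.2 - b.2| = 1}

/-- The edge set E^{(i)}_{l,w} of the hammock network of kind `i`. -/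
def HammockE (i l w : ℕ) : Set (Sym2 (ℤ × ℤ)) :=
  {e | e ∈ HammockEAll l w ∧ ∀ p ∈ e, HammockPar i p}

/-- The allowed steps of an X-path. -/
def XStep : Set (ℤ × ℤ) := {(1, 1), (-1, 1), (1, -1), (-1, -1)}

/-- An X-path: a finite sequence of pairwise distinct lattice points, each obtained
from the previous one by a step in `XStep`. -/
def IsXPath (vs : List (ℤ × ℤ)) : Prop :=
  vs.Nodup ∧ vs.Chain' (fun a b => b - a ∈ XStep)

/-- The list of edges of an X-path. -/
def xEdges (vs : List (ℤ × ℤ)) : List (Sym2 (ℤ × ℤ)) :=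
  (vs.zip vs.tail).map fun q => s(q.1, q.2)

/-- A two-terminal network on the diagonal lattice: an edge set together with
a set of source nodes and a set of terminus nodes. -/
structure HNetwork where
  edges : Set (Sym2 (ℤ × ℤ))
  src : Set (ℤ × ℤ)
  tgt : Set (ℤ × ℤ)

/-- `P` is a pathset: `P ⊆ edges` and `P` contains all edges of some X-path
joining a source node to a terminus node. -/
def HNetwork.IsPathset (N : HNetwork) (P : Set (Sym2 (ℤ × ℤ))) : Prop :=
  P ⊆ N.edges ∧ ∃ (vs : List (ℤ × ℤ)) (h : vs ≠ []),
    IsXPath vs ∧ vs.head h ∈ N.src ∧ vs.getLast h ∈ N.tgt ∧ ∀ e ∈ xEdges vs, e ∈ P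

/-- `C` is a cutset: removing `C` leaves no pathset. -/
def HNetwork.IsCutset (N : HNetwork) (C : Set (Sym2 (ℤ × ℤ))) : Prop :=
  C ⊆ N.edges ∧ ¬ N.IsPathset (N.edges \ C)

/-- A minpath: a pathset no proper subset of which is a pathset. -/
def HNetwork.IsMinpath (N : HNetwork) (P : Set (Sym2 (ℤ × ℤ))) : Prop :=
  N.IsPathset P ∧ ∀ Q, Q ⊂ P → ¬ N.IsPathset Q

/-- A mincut: a cutset no proper subset of which is a cutset. -/
def HNetwork.IsMincut (N : HNetwork) (C : Set (Sym2 (ℤ × ℤ))) : Prop :=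
  N.IsCutset C ∧ ∀ D, D ⊂ C → ¬ N.IsCutset D

/-- The hammock network H^{(i)}_{l,w}: sources are its vertices with x = 0,
terminals its vertices with x = l. -/
def hammock (i l w : ℕ) : HNetwork where
  edges := HammockE i l w
  src := {p | p ∈ HammockV i l w ∧ p.1 = 0}
  tgt := {p | p ∈ HammockV i l w ∧ p.1 = (l : ℤ)}

/-- The dual network H̄^{(i)}_{l,w}: vertex set 𝒱 − V^{(i)}, edge set 𝓔 − E^{(i)},
sources the points with y = 0, terminals the points with y = w. -/
def hammockDual (i l w : ℕ) : HNetwork where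
  edges := HammockEAll l w \ HammockE i l w
  src := {p | p ∈ HammockVAll l w \ HammockV i l w ∧ p.2 = 0}
  tgt := {p | p ∈ HammockVAll l w \ HammockV i l w ∧ p.2 = (w : ℤ)}

/-- The complementary edge: ē of e = {(x,y),(x+1,y±1)} is {(x+1,y),(x,y±1)}. -/
def complEdge : Sym2 (ℤ × ℤ) → Sym2 (ℤ × ℤ) :=
  Sym2.lift ⟨fun a b => s((a.1, b.2), (b.1, a.2)), fun _ _ => Sym2.eq_swap⟩

/-- The other kind: 2/1 = 2 and 2/2 = 1. -/
def otherKind (i : ℕ) : ℕ := if i = 1 then 2 else 1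

/-- The edge set E^{(i)}_{l,w} as a finite set. -/
noncomputable def hammockEFinset (i l w : ℕ) : Finset (Sym2 (ℤ × ℤ)) :=
  ((Finset.Icc (0 : ℤ) l) ×ˢ (Finset.Icc (0 : ℤ) w)).sym2.filter (· ∈ HammockE i l w)

/-- The reliability polynomial h^{(i)}_{l,w}(p) = Σ_P p^{|P|} (1-p)^{lw-|P|},
summing over all pathsets P of H^{(i)}_{l,w}. -/
noncomputable def hammockRel (i l w : ℕ) (p : ℝ) : ℝ :=
  ∑ P ∈ (hammockEFinset i l w).powerset.filter (fun P : Finset (Sym2 (ℤ × ℤ)) => (hammock i l w).IsPathset ↑P),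
    p ^ P.card * (1 - p) ^ (l * w - P.card)

-- aux lemmas
lemma mem_xStep_iff (v : ℤ × ℤ) :
    v ∈ XStep ↔ (v.1 = 1 ∨ v.1 = -1) ∧ (v.2 = 1 ∨ v.2 = -1) := by
  rcases v with ⟨a, b⟩
  simp only [XStep, Set.mem_insert_iff, Set.mem_singleton_iff, Prod.mk.injEq]
  omega

lemma xStep_neg {v : ℤ × ℤ} (h : v ∈ XStep) : -v ∈ XStep := by
  rw [mem_xStep_iff] at h ⊢
  simp only [Prod.fst_neg, Prod.snd_neg]
  omega

lemma xEdges_cons_cons (a b : ℤ × ℤ) (t : List (ℤ × ℤ)) :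
    xEdges (a :: b :: t) = s(a, b) :: xEdges (b :: t) := rfl

lemma xEdges_map (f : ℤ × ℤ → ℤ × ℤ) :
    ∀ vs, xEdges (vs.map f) = (xEdges vs).map (Sym2.map f)
  | [] => rfl
  | [_] => rfl
  | a :: b :: t => by
    have ih := xEdges_map f (b :: t)
    simp only [List.map_cons] at ih ⊢
    rw [xEdges_cons_cons, xEdges_cons_cons, List.map_cons, Sym2.map_pair_eq, ih]

lemma xEdges_append_last :
    ∀ (vs : List (ℤ × ℤ)) (a : ℤ × ℤ) (h : vs ≠ []),
      xEdges (vs ++ [a]) = xEdges vs ++ [s(vs.getLast h, a)]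
  | [], _, h => absurd rfl h
  | [b], a, _ => rfl
  | b :: c :: t, a, _ => by
    have ih := xEdges_append_last (c :: t) a (by simp)
    rw [List.getLast_cons (by simp : c :: t ≠ [])]
    show s(b, c) :: xEdges ((c :: t) ++ [a]) = s(b, c) :: (xEdges (c :: t) ++ _)
    rw [ih]

lemma xEdges_reverse :
    ∀ vs : List (ℤ × ℤ), xEdges vs.reverse = (xEdges vs).reverse
  | [] => rfl
  | [_] => rfl
  | a :: b :: t => by
    have ih := xEdges_reverse (b :: t)
    have hne : (b :: t).reverse ≠ [] := by simp
    rw [List.reverse_cons, xEdges_append_last _ a hne, ih, xEdges_cons_cons]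
    have h2 : (b :: t).reverse.getLast hne = b := by
      rw [List.getLast_reverse]; rfl
    rw [show ((s(a, b) :: xEdges (b :: t)).reverse : List (Sym2 (ℤ × ℤ)))
        = (xEdges (b :: t)).reverse ++ [s(a, b)] from List.reverse_cons ..]
    congr 1
    rw [h2, Sym2.eq_swap]


lemma mem_hammockEFinset {i l w : ℕ} {e : Sym2 (ℤ × ℤ)} :
    e ∈ hammockEFinset i l w ↔ e ∈ HammockE i l w := by
  unfold hammockEFinset
  rw [Finset.mem_filter]
  constructor
  · exact fun h => h.2
  · intro h
    refine ⟨Finset.mem_sym2_iff.mpr ?_, h⟩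
    intro a ha
    obtain ⟨x, y, rfl, hx, hy, -, -⟩ := h.1
    rw [Sym2.mem_iff] at ha
    have : a ∈ HammockVAll l w := by rcases ha with rfl | rfl <;> assumption
    exact Finset.mem_product.mpr ⟨Finset.mem_Icc.mpr ⟨this.1, this.2.1⟩,
      Finset.mem_Icc.mpr ⟨this.2.2.1, this.2.2.2⟩⟩

lemma pathset_image {l w : ℕ} (i j : ℕ) (σ : ℤ × ℤ → ℤ × ℤ) (swap : Bool)
    (hinj : Function.Injective σ)
    (hstep : ∀ a b : ℤ × ℤ, b - a ∈ XStep → σ b - σ a ∈ XStep)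
    (hE : ∀ e ∈ HammockE i l w, Sym2.map σ e ∈ HammockE j l w)
    (hsrc : ∀ p ∈ (hammock i l w).src,
      σ p ∈ (if swap then (hammock j l w).tgt else (hammock j l w).src))
    (htgt : ∀ p ∈ (hammock i l w).tgt,
      σ p ∈ (if swap then (hammock j l w).src else (hammock j l w).tgt))
    {P : Set (Sym2 (ℤ × ℤ))} (hP : (hammock i l w).IsPathset P) :
    (hammock j l w).IsPathset (Sym2.map σ '' P) := by
  obtain ⟨hPE, vs, hne, ⟨hnodup, hchain⟩, hhead, hlast, hedge⟩ := hP
  refine ⟨?_, ?_⟩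
  · rintro e ⟨e', he', rfl⟩; exact hE _ (hPE he')
  · have hne1 : vs.map σ ≠ [] := by simpa using hne
    have hnodup1 : (vs.map σ).Nodup := hnodup.map hinj
    have hchain1 : (vs.map σ).Chain' (fun a b => b - a ∈ XStep) := by
      rw [List.Chain', List.isChain_map]; exact hchain.imp fun a b h => hstep a b h
    have hhead1 : (vs.map σ).head hne1 = σ (vs.head hne) := List.head_map ..
    have hlast1 : (vs.map σ).getLast hne1 = σ (vs.getLast hne) := List.getLast_map ..
    have hedges1 : ∀ e ∈ xEdges (vs.map σ), e ∈ Sym2.map σ '' P := by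
      intro e he
      rw [xEdges_map] at he
      obtain ⟨e', he', rfl⟩ := List.mem_map.mp he
      exact ⟨e', hedge _ he', rfl⟩
    cases swap with
    | false =>
      refine ⟨vs.map σ, hne1, ⟨hnodup1, hchain1⟩, ?_, ?_, hedges1⟩
      · rw [hhead1]; simpa using hsrc _ hhead
      · rw [hlast1]; simpa using htgt _ hlast
    | true =>
      have hner : (vs.map σ).reverse ≠ [] := by simpa using hne1
      refine ⟨(vs.map σ).reverse, hner, ⟨List.nodup_reverse.mpr hnodup1, ?_⟩, ?_, ?_, ?_⟩
      · rw [List.Chain', List.isChain_reverse]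
        exact hchain1.imp fun a b h => by
          have := xStep_neg h
          simpa [flip] using this
      · rw [List.head_reverse, hlast1]
        simpa using htgt _ hlast
      · rw [List.getLast_reverse, hhead1]
        simpa using hsrc _ hhead
      · intro e he
        rw [xEdges_reverse] at he
        exact hedges1 e (List.mem_reverse.mp he)

lemma hammockRel_eq_of_map (l w : ℕ) (σ : ℤ × ℤ → ℤ × ℤ)
    (hinv : Function.Involutive σ) (swap : Bool)
    (hstep : ∀ a b : ℤ × ℤ, b - a ∈ XStep → σ b - σ a ∈ XStep)
    (hE : ∀ i j : ℕ, ((i, j) = (1, 2) ∨ (i, j) = (2, 1)) →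
      ∀ e ∈ HammockE i l w, Sym2.map σ e ∈ HammockE j l w)
    (hsrc : ∀ i j : ℕ, ((i, j) = (1, 2) ∨ (i, j) = (2, 1)) →
      ∀ p ∈ (hammock i l w).src,
        σ p ∈ (if swap then (hammock j l w).tgt else (hammock j l w).src))
    (htgt : ∀ i j : ℕ, ((i, j) = (1, 2) ∨ (i, j) = (2, 1)) →
      ∀ p ∈ (hammock i l w).tgt,
        σ p ∈ (if swap then (hammock j l w).src else (hammock j l w).tgt))
    (p : ℝ) : hammockRel 1 l w p = hammockRel 2 l w p := by
  have hinj : Function.Injective σ := hinv.injective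
  have hmapmap : ∀ e : Sym2 (ℤ × ℤ), Sym2.map σ (Sym2.map σ e) = e := by
    intro e
    rw [Sym2.map_map, show σ ∘ σ = id from funext hinv, Sym2.map_id, id_eq]
  set F : Finset (Sym2 (ℤ × ℤ)) → Finset (Sym2 (ℤ × ℤ)) :=
    fun P => P.image (Sym2.map σ) with hF
  have hFF : ∀ P, F (F P) = P := by
    intro P
    rw [hF]
    simp only [Finset.image_image]
    rw [show (Sym2.map σ ∘ Sym2.map σ) = id from funext hmapmap, Finset.image_id]
  have hcard : ∀ P : Finset (Sym2 (ℤ × ℤ)), (F P).card = P.card := fun P =>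
    Finset.card_image_of_injective _ (Sym2.map.injective hinj)
  have hmem : ∀ i j : ℕ, ((i, j) = (1, 2) ∨ (i, j) = (2, 1)) →
      ∀ P ∈ (hammockEFinset i l w).powerset.filter
        (fun P : Finset (Sym2 (ℤ × ℤ)) => (hammock i l w).IsPathset ↑P),
      F P ∈ (hammockEFinset j l w).powerset.filter
        (fun P : Finset (Sym2 (ℤ × ℤ)) => (hammock j l w).IsPathset ↑P) := by
    intro i j hij P hP
    rw [Finset.mem_filter, Finset.mem_powerset] at hP ⊢
    obtain ⟨hsub, hps⟩ := hP
    constructor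
    · intro e he
      rw [hF] at he
      obtain ⟨e', he', rfl⟩ := Finset.mem_image.mp he
      exact mem_hammockEFinset.mpr (hE i j hij _ (mem_hammockEFinset.mp (hsub he')))
    · rw [hF]
      have : ((P.image (Sym2.map σ) : Finset (Sym2 (ℤ × ℤ))) : Set (Sym2 (ℤ × ℤ)))
          = Sym2.map σ '' ↑P := Finset.coe_image
      rw [this]
      exact pathset_image i j σ swap hinj hstep (hE i j hij) (hsrc i j hij)
        (htgt i j hij) hps
  unfold hammockRel
  refine Finset.sum_nbij' F F (hmem 1 2 (Or.inl rfl)) (hmem 2 1 (Or.inr rfl))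
    (fun P _ => hFF P) (fun P _ => hFF P) ?_
  intro P _
  rw [hcard]

lemma hammockPar_flip {i j : ℕ} (hij : (i, j) = (1, 2) ∨ (i, j) = (2, 1))
    {a b : ℤ × ℤ} (h : Odd (a.1 + a.2 + b.1 + b.2)) (hp : HammockPar i a) :
    HammockPar j b := by
  simp only [Prod.mk.injEq] at hij
  rw [Int.odd_iff] at h
  unfold HammockPar at hp ⊢
  rcases hij with ⟨rfl, rfl⟩ | ⟨rfl, rfl⟩
  · rw [if_pos rfl] at hp
    rw [if_neg (by norm_num), Int.odd_iff]
    rw [Int.even_iff] at hp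
    omega
  · rw [if_neg (by norm_num), Int.odd_iff] at hp
    rw [if_pos rfl, Int.even_iff]
    omega


/-- If at least one of l, w is odd, then the reliability polynomials
of the two kinds of hammock networks of dimensions (l,w) coincide. -/
theorem hammockRel_kinds_eq (l w : ℕ) (hl : 0 < l) (hw : 0 < w)
    (hodd : Odd l ∨ Odd w) :
    ∀ p : ℝ, hammockRel 1 l w p = hammockRel 2 l w p := by
  intro p
  rcases hodd with hlo | hwo
  · -- l odd: reflect in x, sources and terminals swap
    have hlo' : ((l : ℤ)) % 2 = 1 := by
      rw [← Int.odd_iff]; exact_mod_cast hlo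
    set σ : ℤ × ℤ → ℤ × ℤ := fun q => ((l : ℤ) - q.1, q.2) with hσ
    have hflip : ∀ {i j : ℕ}, ((i, j) = (1, 2) ∨ (i, j) = (2, 1)) →
        ∀ a : ℤ × ℤ, HammockPar i a → HammockPar j (σ a) := by
      intro i j hij a hpa
      refine hammockPar_flip hij ?_ hpa
      rw [Int.odd_iff]
      show (a.1 + a.2 + ((l : ℤ) - a.1) + a.2) % 2 = 1
      omega
    have hVAll : ∀ a : ℤ × ℤ, a ∈ HammockVAll l w → σ a ∈ HammockVAll l w := by
      intro a ⟨h1, h2, h3, h4⟩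
      refine ⟨?_, ?_, h3, h4⟩
      · show (0 : ℤ) ≤ (l : ℤ) - a.1; omega
      · show (l : ℤ) - a.1 ≤ (l : ℤ); omega
    refine hammockRel_eq_of_map l w σ ?_ true ?_ ?_ ?_ ?_ p
    · intro q
      show ((l : ℤ) - ((l : ℤ) - q.1), q.2) = q
      rw [Prod.ext_iff]
      constructor
      · show (l : ℤ) - ((l : ℤ) - q.1) = q.1; ring
      · rfl
    · intro a b hab
      rw [mem_xStep_iff] at hab ⊢
      obtain ⟨h1, h2⟩ := hab
      constructor
      · show (l : ℤ) - b.1 - ((l : ℤ) - a.1) = 1 ∨ (l : ℤ) - b.1 - ((l : ℤ) - a.1) = -1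
        rw [Prod.fst_sub] at h1
        omega
      · show b.2 - a.2 = 1 ∨ b.2 - a.2 = -1
        rw [Prod.snd_sub] at h2
        exact h2
    · intro i j hij e he
      obtain ⟨⟨a, b, rfl, ha, hb, h1, h2⟩, hpar⟩ := he
      rw [Sym2.map_pair_eq]
      refine ⟨⟨σ a, σ b, rfl, hVAll a ha, hVAll b hb, ?_, h2⟩, ?_⟩
      · show |(l : ℤ) - a.1 - ((l : ℤ) - b.1)| = 1
        have : (l : ℤ) - a.1 - ((l : ℤ) - b.1) = -(a.1 - b.1) := by ring
        rw [this, abs_neg]; exact h1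
      · intro q hq
        rw [Sym2.mem_iff] at hq
        rcases hq with rfl | rfl
        · exact hflip hij a (hpar a (Sym2.mem_mk_left a b))
        · exact hflip hij b (hpar b (Sym2.mem_mk_right a b))
    · intro i j hij q hq
      obtain ⟨⟨hV, hpar⟩, hx⟩ := hq
      rw [if_pos rfl]
      refine ⟨⟨hVAll q hV, hflip hij q hpar⟩, ?_⟩
      show (l : ℤ) - q.1 = (l : ℤ)
      rw [hx]; ring
    · intro i j hij q hq
      obtain ⟨⟨hV, hpar⟩, hx⟩ := hq
      rw [if_pos rfl]
      refine ⟨⟨hVAll q hV, hflip hij q hpar⟩, ?_⟩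
      show (l : ℤ) - q.1 = 0
      rw [hx]; ring
  · -- w odd: reflect in y, sources and terminals preserved
    have hwo' : ((w : ℤ)) % 2 = 1 := by
      rw [← Int.odd_iff]; exact_mod_cast hwo
    set σ : ℤ × ℤ → ℤ × ℤ := fun q => (q.1, (w : ℤ) - q.2) with hσ
    have hflip : ∀ {i j : ℕ}, ((i, j) = (1, 2) ∨ (i, j) = (2, 1)) →
        ∀ a : ℤ × ℤ, HammockPar i a → HammockPar j (σ a) := by
      intro i j hij a hpa
      refine hammockPar_flip hij ?_ hpa
      rw [Int.odd_iff]
      show (a.1 + a.2 + a.1 + ((w : ℤ) - a.2)) % 2 = 1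
      omega
    have hVAll : ∀ a : ℤ × ℤ, a ∈ HammockVAll l w → σ a ∈ HammockVAll l w := by
      intro a ⟨h1, h2, h3, h4⟩
      refine ⟨h1, h2, ?_, ?_⟩
      · show (0 : ℤ) ≤ (w : ℤ) - a.2; omega
      · show (w : ℤ) - a.2 ≤ (w : ℤ); omega
    refine hammockRel_eq_of_map l w σ ?_ false ?_ ?_ ?_ ?_ p
    · intro q
      show (q.1, (w : ℤ) - ((w : ℤ) - q.2)) = q
      rw [Prod.ext_iff]
      constructor
      · rfl
      · show (w : ℤ) - ((w : ℤ) - q.2) = q.2; ring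
    · intro a b hab
      rw [mem_xStep_iff] at hab ⊢
      obtain ⟨h1, h2⟩ := hab
      constructor
      · show b.1 - a.1 = 1 ∨ b.1 - a.1 = -1
        rw [Prod.fst_sub] at h1
        exact h1
      · show (w : ℤ) - b.2 - ((w : ℤ) - a.2) = 1 ∨ (w : ℤ) - b.2 - ((w : ℤ) - a.2) = -1
        rw [Prod.snd_sub] at h2
        omega
    · intro i j hij e he
      obtain ⟨⟨a, b, rfl, ha, hb, h1, h2⟩, hpar⟩ := he
      rw [Sym2.map_pair_eq]
      refine ⟨⟨σ a, σ b, rfl, hVAll a ha, hVAll b hb, h1, ?_⟩, ?_⟩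
      · show |(w : ℤ) - a.2 - ((w : ℤ) - b.2)| = 1
        have : (w : ℤ) - a.2 - ((w : ℤ) - b.2) = -(a.2 - b.2) := by ring
        rw [this, abs_neg]; exact h2
      · intro q hq
        rw [Sym2.mem_iff] at hq
        rcases hq with rfl | rfl
        · exact hflip hij a (hpar a (Sym2.mem_mk_left a b))
        · exact hflip hij b (hpar b (Sym2.mem_mk_right a b))
    · intro i j hij q hq
      obtain ⟨⟨hV, hpar⟩, hx⟩ := hq
      rw [if_neg (by simp)]
      exact ⟨⟨hVAll q hV, hflip hij q hpar⟩, hx⟩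
    · intro i j hij q hq
      obtain ⟨⟨hV, hpar⟩, hx⟩ := hq
      rw [if_neg (by simp)]
      exact ⟨⟨hVAll q hV, hflip hij q hpar⟩, hx⟩
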